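/- There exists an effect algebra L with the Vitali-Hahn-Saks property that fails the Nikodym property. -/

import Mathlib

open Filter Topology
open scoped ENNReal NNReal

/-- An effect algebra: a partial commutative monoid with orthosupplementation
and the zero-one law. `D a b` means `a ⊕ b` is defined; `add` is the (junk-valued
outside `D`) total extension of `⊕`. -/
structure EffectAlgebra (L : Type*) where
  D : L → L → Prop
  add : L → L → L
  zero : L
  one : L
  comm_def : ∀ {a b}, D a b → D b a
  comm : ∀ {a b}, D a b → add a b = add b a
  assoc_def₁ : ∀ {a b c}, D b c → D a (add b c) → D a b
  assoc_def₂ : ∀ {a b c}, D b c → D a (add b c) → D (add a b) c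
  assoc : ∀ {a b c}, D b c → D a (add b c) → add (add a b) c = add a (add b c)
  orth : ∀ a, ∃! a', D a a' ∧ add a a' = one
  zero_one : ∀ {a}, D one a → a = zero

namespace EffectAlgebra

variable {L : Type*}

/-- The canonical order: `a ≤ b` iff `a ⊕ r = b` for some `r`. -/
def le (E : EffectAlgebra L) (a b : L) : Prop := ∃ r, E.D a r ∧ E.add a r = b

/-- The orthosupplement `1 ⊖ a`. -/
noncomputable def compl (E : EffectAlgebra L) (a : L) : L := (E.orth a).choose

/-- Partial sums `a 0 ⊕ ⋯ ⊕ a n`. -/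
def psum (E : EffectAlgebra L) (a : ℕ → L) : ℕ → L
  | 0 => a 0
  | n + 1 => E.add (E.psum a n) (a (n + 1))

/-- A sequence is orthogonal when all its finite orthosums are defined. -/
def Orthogonal (E : EffectAlgebra L) (a : ℕ → L) : Prop :=
  ∀ n, E.D (E.psum a n) (a (n + 1))

/-- `s` is the supremum of the set `S` in the canonical order. -/
def IsSup (E : EffectAlgebra L) (S : Set L) (s : L) : Prop :=
  (∀ x ∈ S, E.le x s) ∧ ∀ u, (∀ x ∈ S, E.le x u) → E.le s u

/-- `s = ⊕ₙ a n`: the sequence is orthogonal and `s` is the sup of the finite orthosums. -/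
def IsOrthoSum (E : EffectAlgebra L) (a : ℕ → L) (s : L) : Prop :=
  E.Orthogonal a ∧ E.IsSup (Set.range (E.psum a)) s

/-- Additive (finitely additive) measure. -/
def IsMeasure {G : Type*} [AddCommMonoid G] (E : EffectAlgebra L) (μ : L → G) : Prop :=
  ∀ a b, E.D a b → μ (E.add a b) = μ a + μ b

/-- σ-additivity: `μ (⊕ₙ a n) = Σₙ μ (a n)` whenever the orthosum exists. -/
def SigmaAdditive {G : Type*} [AddCommMonoid G] [TopologicalSpace G]
    (E : EffectAlgebra L) (μ : L → G) : Prop :=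
  ∀ a s, E.IsOrthoSum a s →
    Tendsto (fun n => ∑ k ∈ Finset.range n, μ (a k)) atTop (𝓝 (μ s))

/-- Exhaustivity: `μ (a n) → 0` along every orthogonal sequence. -/
def Exhaustive {G : Type*} [AddCommMonoid G] [TopologicalSpace G]
    (E : EffectAlgebra L) (μ : L → G) : Prop :=
  ∀ a, E.Orthogonal a → Tendsto (fun n => μ (a n)) atTop (𝓝 0)

/-- A generator: every element is the sup of an increasing sequence from `B`. -/
def IsGenerator (E : EffectAlgebra L) (B : Set L) : Prop :=
  ∀ a : L, ∃ b : ℕ → L, (∀ n, b n ∈ B) ∧ (∀ n, E.le (b n) (b (n + 1)))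
    ∧ E.IsSup (Set.range b) a

/-- Riesz decomposition property. -/
def RDP (E : EffectAlgebra L) : Prop :=
  ∀ a b c, E.D a b → E.le c (E.add a b) →
    ∃ c₁ c₂, E.D c₁ c₂ ∧ E.add c₁ c₂ = c ∧ E.le c₁ a ∧ E.le c₂ b

/-- Strong Riesz decomposition property. -/
def sRDP (E : EffectAlgebra L) : Prop :=
  ∀ (a : ℕ → L) (s c : L), E.IsOrthoSum a s → E.le c s →
    ∃ c' : ℕ → L, E.IsOrthoSum c' c ∧ ∀ n, E.le (c' n) (a n)

/-- A natural basis: an orthogonal sequence of minimal nonzero elements with orthosum `1`. -/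
def IsNaturalBasis (E : EffectAlgebra L) (b : ℕ → L) : Prop :=
  E.IsOrthoSum b E.one ∧
  ∀ n, b n ≠ E.zero ∧ ∀ c, c ≠ E.zero → E.le c (b n) → c = b n

/-- The set of finite orthosums of elements of the sequence `b`. -/
def finOrthosums (E : EffectAlgebra L) (b : ℕ → L) : Set L :=
  { x | ∃ c : ℕ → L, (∀ n, c n = b n ∨ c n = E.zero) ∧ E.Orthogonal c ∧
        ∃ N, x = E.psum c N }

/-- A sequence of measures is pointwise convergent. -/
def PtwiseConv (μ : ℕ → L → ℝ) : Prop :=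
  ∀ a : L, ∃ x : ℝ, Tendsto (fun i => μ i a) atTop (𝓝 x)

/-- Uniform exhaustivity of a sequence of measures. -/
def UnifExhaustive (E : EffectAlgebra L) (μ : ℕ → L → ℝ) : Prop :=
  ∀ a, E.Orthogonal a →
    TendstoUniformly (fun n (i : ℕ) => μ i (a n)) (fun _ => (0 : ℝ)) atTop

/-- Uniform strong additivity of a sequence of measures. -/
def UnifStronglyAdditive (E : EffectAlgebra L) (μ : ℕ → L → ℝ) : Prop :=
  ∀ a, E.Orthogonal a → ∃ f : ℕ → ℝ,
    TendstoUniformly (fun n (i : ℕ) => ∑ k ∈ Finset.range n, μ i (a k)) f atTop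

/-- The Nikodym property. -/
def Nikodym (E : EffectAlgebra L) : Prop :=
  ∀ μ : ℕ → L → ℝ, (∀ i, E.IsMeasure (μ i)) → (∀ i, ∃ M, ∀ a, |μ i a| ≤ M) →
    (∀ a : L, ∃ M, ∀ i, |μ i a| ≤ M) → ∃ M, ∀ i, ∀ a : L, |μ i a| ≤ M

/-- The Grothendieck property. -/
def Grothendieck (E : EffectAlgebra L) : Prop :=
  ∀ μ : ℕ → L → ℝ, (∀ i, E.IsMeasure (μ i)) → (∀ i, ∃ M, ∀ a, |μ i a| ≤ M) →
    PtwiseConv μ → (∃ M, ∀ i, ∀ a : L, |μ i a| ≤ M) → E.UnifStronglyAdditive μ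

/-- The Vitali-Hahn-Saks property. -/
def VHS (E : EffectAlgebra L) : Prop :=
  ∀ μ : ℕ → L → ℝ, (∀ i, E.IsMeasure (μ i)) → (∀ i, ∃ M, ∀ a, |μ i a| ≤ M) →
    PtwiseConv μ → E.UnifExhaustive μ

/-- The σ-Nikodym property. -/
def SigmaNikodym (E : EffectAlgebra L) : Prop :=
  ∀ μ : ℕ → L → ℝ, (∀ i, E.IsMeasure (μ i)) → (∀ i, E.SigmaAdditive (μ i)) →
    (∀ i, ∃ M, ∀ a, |μ i a| ≤ M) →
    (∀ a : L, ∃ M, ∀ i, |μ i a| ≤ M) → ∃ M, ∀ i, ∀ a : L, |μ i a| ≤ M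

/-- The σ-Vitali-Hahn-Saks property. -/
def SigmaVHS (E : EffectAlgebra L) : Prop :=
  ∀ μ : ℕ → L → ℝ, (∀ i, E.IsMeasure (μ i)) → (∀ i, E.SigmaAdditive (μ i)) →
    (∀ i, ∃ M, ∀ a, |μ i a| ≤ M) → PtwiseConv μ → E.UnifExhaustive μ

/-- A bounding subset. -/
def Bounding (E : EffectAlgebra L) (B : Set L) : Prop :=
  ∀ (G : Type) [NormedAddCommGroup G], ∀ μ : ℕ → L → G,
    (∀ i, E.IsMeasure (μ i)) → (∀ i, E.SigmaAdditive (μ i)) →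
    (∀ a : L, ∃ M, ∀ i, ‖μ i a‖ ≤ M) →
    ((∃ M, ∀ i, ∀ b ∈ B, ‖μ i b‖ ≤ M) ↔ (∃ M, ∀ i, ∀ a : L, ‖μ i a‖ ≤ M))

/-- A natural subset: a generator closed under orthosums of orthogonal pairs all of whose
orthogonal-complement slices are bounding. -/
def NaturalSubset (E : EffectAlgebra L) (B : Set L) : Prop :=
  E.IsGenerator B ∧ (∀ b ∈ B, ∀ c ∈ B, E.D b c → E.add b c ∈ B) ∧
    ∀ b ∈ B, E.Bounding {c ∈ B | E.D c b}

/-- A natural effect algebra: one admitting a natural subset. -/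
def Natural (E : EffectAlgebra L) : Prop := ∃ B, E.NaturalSubset B

/-- The orthogonally sequential property. -/
def OSP (E : EffectAlgebra L) : Prop :=
  ∀ b : ℕ → L, ∃ c : ℕ → L, E.Orthogonal c ∧ (∀ k, E.le (c k) (b k)) ∧
    ∀ (a : L) (k₀ : ℕ), E.le a (b k₀) → (∀ i, i ≠ k₀ → E.le (b i) (E.compl a)) →
      E.le a (c k₀)

/-- The subsequential interpolation property. -/
def SIP (E : EffectAlgebra L) : Prop :=
  ∀ a : ℕ → L, E.Orthogonal a → ∀ M : Set ℕ, M.Infinite →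
    ∃ (x : L) (N : Set ℕ), N ⊆ M ∧ N.Infinite ∧ (∀ n ∈ N, E.le (a n) x) ∧
      ∀ n ∉ N, E.le (a n) (E.compl x)

/-- Iterated orthosum starting from `x`: all steps defined. -/
def OrthoFrom (E : EffectAlgebra L) : L → List L → Prop
  | _, [] => True
  | x, y :: ys => E.D x y ∧ E.OrthoFrom (E.add x y) ys

/-- The orthosum `x ⊕ y₁ ⊕ ⋯ ⊕ yₙ` of a nonempty list. -/
def psumList (E : EffectAlgebra L) : L → List L → L
  | x, [] => x
  | x, y :: ys => E.psumList (E.add x y) ys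

/-- The variation of a measure: the sup over finite decompositions
`e = e₁ ⊕ ⋯ ⊕ eₙ` of `Σ ‖μ eᵢ‖`, valued in `[0,∞]`. -/
noncomputable def variation {G : Type*} [NormedAddCommGroup G]
    (E : EffectAlgebra L) (μ : L → G) (e : L) : ℝ≥0∞ :=
  sSup { v : ℝ≥0∞ | ∃ (x : L) (xs : List L), E.OrthoFrom x xs ∧ E.psumList x xs = e ∧
    v = ((x :: xs).map fun y => (‖μ y‖₊ : ℝ≥0∞)).sum }

end EffectAlgebra

/-- The carrier: zero, one, and atoms `x b n` with `x true n ⊕ x false n = 1`. -/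
inductive L13 : Type
  | zero | one | x (b : Bool) (n : ℕ)

namespace L13

def D13 : L13 → L13 → Prop := fun a b =>
  a = zero ∨ b = zero ∨ ∃ c n, a = x c n ∧ b = x (!c) n

def add13 : L13 → L13 → L13
  | .zero, b => b
  | .one, .zero => .one
  | .x b n, .zero => .x b n
  | _, _ => .one

lemma add13_zero : ∀ a, add13 a zero = a := by rintro (_|_|⟨b, n⟩) <;> rfl

lemma zero_add13 : ∀ a, add13 zero a = a := fun _ => rfl

lemma add13_x_x (b c : Bool) (n m : ℕ) : add13 (x b n) (x c m) = one := rfl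

def E13 : EffectAlgebra L13 where
  D := D13
  add := add13
  zero := zero
  one := one
  comm_def := by
    rintro a b (rfl | rfl | ⟨c, n, rfl, rfl⟩)
    · exact Or.inr (Or.inl rfl)
    · exact Or.inl rfl
    · exact Or.inr (Or.inr ⟨!c, n, rfl, by rw [Bool.not_not]⟩)
  comm := by
    rintro a b (rfl | rfl | ⟨c, n, rfl, rfl⟩)
    · simp [add13_zero, zero_add13]
    · simp [add13_zero, zero_add13]
    · rfl
  assoc_def₁ := by
    rintro a b c (rfl | rfl | ⟨d, n, rfl, rfl⟩) h2
    · exact Or.inr (Or.inl rfl)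
    · rwa [add13_zero] at h2
    · rw [add13_x_x] at h2
      rcases h2 with rfl | h | ⟨e, m, _, h⟩
      · exact Or.inl rfl
      · exact absurd h (by simp)
      · exact absurd h (by simp)
  assoc_def₂ := by
    rintro a b c (rfl | rfl | ⟨d, n, rfl, rfl⟩) h2
    · rw [zero_add13] at h2; rwa [add13_zero]
    · exact Or.inr (Or.inl rfl)
    · rw [add13_x_x] at h2
      rcases h2 with rfl | h | ⟨e, m, _, h⟩
      · exact Or.inr (Or.inr ⟨d, n, rfl, rfl⟩)
      · exact absurd h (by simp)
      · exact absurd h (by simp)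
  assoc := by
    rintro a b c (rfl | rfl | ⟨d, n, rfl, rfl⟩) h2
    · simp [add13_zero, zero_add13]
    · simp [add13_zero, zero_add13]
    · rw [add13_x_x] at h2
      rcases h2 with rfl | h | ⟨e, m, _, h⟩
      · rfl
      · exact absurd h (by simp)
      · exact absurd h (by simp)
  orth := by
    rintro (_|_|⟨b, n⟩)
    · refine ⟨one, ⟨Or.inl rfl, rfl⟩, ?_⟩
      rintro y ⟨-, hy⟩; exact hy
    · refine ⟨zero, ⟨Or.inr (Or.inl rfl), rfl⟩, ?_⟩
      rintro y ⟨h, -⟩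
      rcases h with h | rfl | ⟨c, m, h, -⟩
      · exact absurd h (by simp)
      · rfl
      · exact absurd h (by simp)
    · refine ⟨x (!b) n, ⟨Or.inr (Or.inr ⟨b, n, rfl, rfl⟩), rfl⟩, ?_⟩
      rintro y ⟨h, hy⟩
      rcases h with h | rfl | ⟨c, m, h, rfl⟩
      · exact absurd h (by simp)
      · rw [add13_zero] at hy; exact absurd hy (by simp)
      · obtain ⟨rfl, rfl⟩ : b = c ∧ n = m := by
          injection h with h1 h2; exact ⟨h1.symm ▸ rfl, h2⟩
        rfl
  zero_one := by
    rintro a (h | rfl | ⟨c, m, h, -⟩)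
    · exact absurd h (by simp)
    · rfl
    · exact absurd h (by simp)

def rank13 : L13 → ℕ
  | .zero => 0 | .x _ _ => 1 | .one => 2

lemma rank13_le_two : ∀ a, rank13 a ≤ 2 := by rintro (_|_|⟨b, n⟩) <;> simp [rank13]

lemma rank13_step {p y : L13} (h : D13 p y) :
    rank13 p ≤ rank13 (add13 p y) ∧ (y ≠ zero → rank13 p < rank13 (add13 p y)) := by
  rcases h with rfl | rfl | ⟨c, n, rfl, rfl⟩
  · refine ⟨Nat.zero_le _, ?_⟩
    rintro hy
    rcases y with _|_|⟨b, n⟩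
    · exact absurd rfl hy
    · exact Nat.zero_lt_two
    · exact Nat.zero_lt_one
  · rw [add13_zero]; exact ⟨le_rfl, fun h => absurd rfl h⟩
  · rw [add13_x_x]; exact ⟨by simp [rank13], fun _ => by simp [rank13]⟩

lemma psum_succ (a : ℕ → L13) (n : ℕ) :
    E13.psum a (n + 1) = add13 (E13.psum a n) (a (n + 1)) := rfl

lemma orth_eventually_zero (a : ℕ → L13) (h : E13.Orthogonal a) :
    ∃ N, ∀ n ≥ N, a n = zero := by
  set f : ℕ → ℕ := fun n => rank13 (E13.psum a n) with hf
  have hmono : Monotone f :=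
    monotone_nat_of_le_succ fun n => (rank13_step (h n)).1
  have hstrict : ∀ n, a (n + 1) ≠ zero → f n < f (n + 1) :=
    fun n hn => (rank13_step (h n)).2 hn
  have hbd : ∀ n, f n ≤ 2 := fun n => rank13_le_two _
  by_contra hcon
  push_neg at hcon
  obtain ⟨n1, hn1, ha1⟩ := hcon 1
  obtain ⟨m1, rfl⟩ : ∃ m, n1 = m + 1 := ⟨n1 - 1, by omega⟩
  obtain ⟨n2, hn2, ha2⟩ := hcon (m1 + 2)
  obtain ⟨m2, rfl⟩ : ∃ m, n2 = m + 1 := ⟨n2 - 1, by omega⟩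
  obtain ⟨n3, hn3, ha3⟩ := hcon (m2 + 2)
  obtain ⟨m3, rfl⟩ : ∃ m, n3 = m + 1 := ⟨n3 - 1, by omega⟩
  have h1 : f m1 < f (m1 + 1) := hstrict m1 ha1
  have h2 : f m2 < f (m2 + 1) := hstrict m2 ha2
  have h3 : f m3 < f (m3 + 1) := hstrict m3 ha3
  have g1 : f (m1 + 1) ≤ f m2 := hmono (by omega)
  have g2 : f (m2 + 1) ≤ f m3 := hmono (by omega)
  have := hbd (m3 + 1)
  omega

/-- The unbounded family of measures: `μ i` charges only the `i`-th pair. -/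
noncomputable def mu13 : ℕ → L13 → ℝ
  | i, .x b k => if k = i then (if b then (i : ℝ) else -(i : ℝ)) else 0
  | _, _ => 0

lemma mu13_measure (i : ℕ) : E13.IsMeasure (mu13 i) := by
  rintro a b (rfl | rfl | ⟨c, n, rfl, rfl⟩)
  · show mu13 i b = mu13 i zero + mu13 i b
    simp [mu13]
  · rw [show E13.add a zero = a from add13_zero a]
    show mu13 i a = mu13 i a + mu13 i zero
    simp [mu13]
  · show mu13 i one = mu13 i (x c n) + mu13 i (x (!c) n)
    rcases eq_or_ne n i with rfl | hne <;> cases c <;> simp [mu13, *]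

lemma mu13_bound_i (i : ℕ) (a : L13) : |mu13 i a| ≤ i := by
  rcases a with _|_|⟨b, k⟩
  · simp [mu13]
  · simp [mu13]
  · simp only [mu13]
    rcases eq_or_ne k i with rfl | hne
    · cases b <;> simp
    · simp [hne]

lemma mu13_ptwise (a : L13) : ∃ M, ∀ i, |mu13 i a| ≤ M := by
  rcases a with _|_|⟨b, k⟩
  · exact ⟨0, fun i => by simp [mu13]⟩
  · exact ⟨0, fun i => by simp [mu13]⟩
  · refine ⟨k, fun i => ?_⟩
    simp only [mu13]
    rcases eq_or_ne k i with rfl | hne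
    · cases b <;> simp
    · simp [hne]

lemma vhs13 : E13.VHS := by
  intro μ hmeas _ _ a ha
  obtain ⟨N, hN⟩ := orth_eventually_zero a ha
  have hz : ∀ i, μ i zero = 0 := by
    intro i
    have := hmeas i zero zero (Or.inl rfl)
    rw [show E13.add zero zero = zero from rfl] at this
    linarith
  rw [Metric.tendstoUniformly_iff]
  intro ε hε
  filter_upwards [Filter.eventually_ge_atTop N] with n hn i
  rw [hN n hn, hz i]
  simpa using hε

lemma not_nikodym13 : ¬ E13.Nikodym := by
  intro h
  obtain ⟨M, hM⟩ := h mu13 mu13_measure (fun i => ⟨i, mu13_bound_i i⟩) mu13_ptwise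
  set i := ⌈M⌉₊ + 1 with hi
  have h1 : |mu13 i (x true i)| ≤ M := hM i (x true i)
  have h2 : mu13 i (x true i) = (i : ℝ) := by simp [mu13]
  have h3 : M ≤ (⌈M⌉₊ : ℝ) := Nat.le_ceil M
  rw [h2, abs_of_nonneg (by positivity)] at h1
  have : ((⌈M⌉₊ : ℝ) + 1 : ℝ) ≤ M := by rw [hi] at h1; push_cast at h1 ⊢; linarith
  linarith

end L13

open EffectAlgebra in
/-- There is an effect algebra with the Vitali–Hahn–Saks property failing the
Nikodym property. -/
theorem stmt13 : ∃ (L : Type) (E : EffectAlgebra L), E.VHS ∧ ¬ E.Nikodym := by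
  exact ⟨L13, L13.E13, L13.vhs13, L13.not_nikodym13⟩
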